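/- If ≺ is a priority on the conflict graph of a finite set r all of whose extensions (priorities ≺' ⊇ ≺) are acyclic, then the set of g-repairs equals the set of l-repairs. -/

import Mathlib

/-- A relation is acyclic if no element is related to itself by the transitive closure. -/
def Acyclic {α : Type*} (prec : α → α → Prop) : Prop :=
  ∀ x, ¬ Relation.TransGen prec x x

/-- The global preference order on sets of tuples: `X ≪ Y`. -/
def ll {α : Type*} (prec : α → α → Prop) (X Y : Set α) : Prop :=
  ∀ x ∈ X \ Y, ∃ y ∈ Y \ X, prec x y

/-- Closed neighborhood of `x` in the conflict graph. -/
def nbhd {α : Type*} (conflict : α → α → Prop) (x : α) : Set α :=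
  {x} ∪ {y | conflict x y}

/-- The winnow operator: elements of `s` not dominated by any element of `s`. -/
def winnow {α : Type*} (prec : α → α → Prop) (s : Set α) : Set α :=
  {t ∈ s | ¬ ∃ t' ∈ s, prec t t'}

/-- A repair: a maximal subset of `r` containing no conflicting pair. -/
def IsRepair {α : Type*} (r : Set α) (conflict : α → α → Prop) (X : Set α) : Prop :=
  X ⊆ r ∧ (∀ a ∈ X, ∀ b ∈ X, ¬ conflict a b) ∧
    ∀ y ∈ r, y ∉ X → ∃ a ∈ X, conflict y a

/-- A locally preferred repair: obtainable by iteratively choosing an undominated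
tuple and removing it together with its conflict neighborhood. -/
def IsLRepair {α : Type*} (r : Set α) (conflict prec : α → α → Prop) (X : Set α) : Prop :=
  ∃ (n : ℕ) (x : Fin n → α), Function.Injective x ∧ X = Set.range x ∧
    (∀ i : Fin n, x i ∈ winnow prec (r \ {y | ∃ j, j < i ∧ y ∈ nbhd conflict (x j)})) ∧
    winnow prec (r \ {y | ∃ i, y ∈ nbhd conflict (x i)}) = ∅

/-- A globally preferred repair: a `≪`-maximal repair. -/
def IsGRepair {α : Type*} (r : Set α) (conflict prec : α → α → Prop) (X : Set α) : Prop :=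
  IsRepair r conflict X ∧ ∀ Y, IsRepair r conflict Y → ll prec X Y → Y = X


section Aux
variable {α : Type*}

lemma exists_max_of_acyclic_aux {p : α → α → Prop} (hac : Acyclic p) :
    ∀ (n : ℕ) (S : Set α) (hS : S.Finite), S.ncard ≤ n → S.Nonempty →
      ∃ m ∈ S, ∀ t ∈ S, ¬ p m t := by
  intro n
  induction n with
  | zero =>
    intro S hS hcard hne
    exact absurd ((Set.ncard_eq_zero hS).mp (Nat.le_zero.mp hcard)) hne.ne_empty
  | succ n ih =>
    intro S hS hcard hne
    obtain ⟨s, hs⟩ := hne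
    by_cases h : ∀ t ∈ S, ¬ p s t
    · exact ⟨s, hs, h⟩
    · push_neg at h
      obtain ⟨t, htS, hpt⟩ := h
      set S' := {u ∈ S | Relation.TransGen p s u} with hS'def
      have hS'sub : S' ⊆ S := fun u hu => hu.1
      have hS' : S'.Finite := hS.subset hS'sub
      have hsne : s ∉ S' := fun hs' => hac s hs'.2
      have hlt : S'.ncard < S.ncard :=
        Set.ncard_lt_ncard ⟨hS'sub, fun hsub => hsne (hsub hs)⟩ hS
      obtain ⟨m, hm, hmax⟩ := ih S' hS' (by omega)
        ⟨t, htS, Relation.TransGen.single hpt⟩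
      refine ⟨m, hm.1, fun u hu hpu => ?_⟩
      exact hmax u ⟨hu, hm.2.trans (Relation.TransGen.single hpu)⟩ hpu

lemma exists_max_of_acyclic {p : α → α → Prop} (hac : Acyclic p)
    {S : Set α} (hS : S.Finite) (hne : S.Nonempty) :
    ∃ m ∈ S, ∀ t ∈ S, ¬ p m t :=
  exists_max_of_acyclic_aux hac S.ncard S hS le_rfl hne

lemma winnow_nonempty {prec : α → α → Prop} (hac : Acyclic prec)
    {S : Set α} (hS : S.Finite) (hne : S.Nonempty) :
    (winnow prec S).Nonempty := by
  obtain ⟨m, hm, hmax⟩ := exists_max_of_acyclic hac hS hne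
  exact ⟨m, hm, fun ⟨t, htS, hpt⟩ => hmax t htS hpt⟩

lemma exists_repair_superset {r : Set α} (hr : r.Finite) {conflict : α → α → Prop}
    (hsymm : ∀ x y, conflict x y → conflict y x) (hirr : ∀ x, ¬ conflict x x)
    {C : Set α} (hCr : C ⊆ r) (hCind : ∀ a ∈ C, ∀ b ∈ C, ¬ conflict a b) :
    ∃ Y, IsRepair r conflict Y ∧ C ⊆ Y := by
  set 𝒞 : Set (Set α) := {Y | C ⊆ Y ∧ Y ⊆ r ∧ ∀ a ∈ Y, ∀ b ∈ Y, ¬ conflict a b} with h𝒞def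
  have h𝒞fin : 𝒞.Finite := hr.finite_subsets.subset (fun Y hY => hY.2.1)
  have hac : Acyclic (fun A B : Set α => A ⊂ B) := by
    intro A hA
    have htrans : Transitive (fun A B : Set α => A ⊂ B) := fun _ _ _ h1 h2 => h1.trans h2
    haveI : IsTrans (Set α) (fun A B : Set α => A ⊂ B) := ⟨fun _ _ _ h1 h2 => htrans h1 h2⟩
    rw [Relation.transGen_eq_self] at hA
    exact hA.ne rfl
  obtain ⟨Y, hY, hmax⟩ := exists_max_of_acyclic hac h𝒞fin ⟨C, subset_rfl, hCr, hCind⟩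
  refine ⟨Y, ⟨hY.2.1, hY.2.2, ?_⟩, hY.1⟩
  intro y hyr hyY
  by_contra h
  push_neg at h
  have hmem : insert y Y ∈ 𝒞 := by
    refine ⟨hY.1.trans (Set.subset_insert _ _), Set.insert_subset hyr hY.2.1, ?_⟩
    intro a ha b hb
    rcases ha with rfl | ha
    · rcases hb with rfl | hb
      · exact hirr _
      · exact h b hb
    · rcases hb with rfl | hb
      · exact fun hc => h a ha (hsymm _ _ hc)
      · exact hY.2.2 a ha b hb
  exact hmax _ hmem (Set.ssubset_insert hyY)

end Aux

section LSeq
variable {α : Type*}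

def LSeq (conflict prec : α → α → Prop) : Set α → List α → Prop
  | S, [] => winnow prec S = ∅
  | S, m :: L => m ∈ winnow prec S ∧ LSeq conflict prec (S \ nbhd conflict m) L

lemma cons_prefix_set (conflict : α → α → Prop) (m : α) (L : List α) (S : Set α) (i : ℕ) :
    S \ {y | ∃ j, ∃ (hj : j < (m :: L).length), j < i + 1 ∧
        y ∈ nbhd conflict ((m :: L).get ⟨j, hj⟩)} =
      (S \ nbhd conflict m) \
        {y | ∃ j, ∃ (hj : j < L.length), j < i ∧ y ∈ nbhd conflict (L.get ⟨j, hj⟩)} := by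
  rw [Set.diff_diff]
  congr 1
  ext y
  simp only [Set.mem_setOf_eq, Set.mem_union]
  constructor
  · rintro ⟨j, hj, hji, hy⟩
    cases j with
    | zero => exact Or.inl hy
    | succ j => exact Or.inr ⟨j, by simpa using hj, by omega, by simpa using hy⟩
  · rintro (hy | ⟨j, hj, hji, hy⟩)
    · exact ⟨0, by simp, by omega, hy⟩
    · exact ⟨j + 1, by simpa using hj, by omega, by simpa using hy⟩

lemma cons_full_set (conflict : α → α → Prop) (m : α) (L : List α) (S : Set α) :
    S \ {y | ∃ j, ∃ (hj : j < (m :: L).length),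
        y ∈ nbhd conflict ((m :: L).get ⟨j, hj⟩)} =
      (S \ nbhd conflict m) \
        {y | ∃ j, ∃ (hj : j < L.length), y ∈ nbhd conflict (L.get ⟨j, hj⟩)} := by
  rw [Set.diff_diff]
  congr 1
  ext y
  simp only [Set.mem_setOf_eq, Set.mem_union]
  constructor
  · rintro ⟨j, hj, hy⟩
    cases j with
    | zero => exact Or.inl hy
    | succ j => exact Or.inr ⟨j, by simpa using hj, by simpa using hy⟩
  · rintro (hy | ⟨j, hj, hy⟩)
    · exact ⟨0, by simp, hy⟩
    · exact ⟨j + 1, by simpa using hj, by simpa using hy⟩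

lemma LSeq_get {conflict prec : α → α → Prop} :
    ∀ {L : List α} {S : Set α}, LSeq conflict prec S L →
      (∀ (i : ℕ) (hi : i < L.length),
        L.get ⟨i, hi⟩ ∈ winnow prec (S \ {y | ∃ j, ∃ (hj : j < L.length),
          j < i ∧ y ∈ nbhd conflict (L.get ⟨j, hj⟩)})) ∧
      winnow prec (S \ {y | ∃ j, ∃ (hj : j < L.length),
        y ∈ nbhd conflict (L.get ⟨j, hj⟩)}) = ∅ := by
  intro L
  induction L with
  | nil =>
    intro S h
    have he : {y | ∃ j, ∃ (hj : j < ([] : List α).length),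
        y ∈ nbhd conflict (([] : List α).get ⟨j, hj⟩)} = (∅ : Set α) := by
      ext y; simp
    refine ⟨fun i hi => absurd hi (by simp), ?_⟩
    rw [he, Set.diff_empty]
    exact h
  | cons m L ih =>
    intro S h
    obtain ⟨hm, hrest⟩ := h
    have IH := ih hrest
    constructor
    · intro i hi
      cases i with
      | zero =>
        have he : {y | ∃ j, ∃ (hj : j < (m :: L).length),
            j < 0 ∧ y ∈ nbhd conflict ((m :: L).get ⟨j, hj⟩)} = (∅ : Set α) := by
          ext y; simp
        rw [he, Set.diff_empty]
        exact hm
      | succ i =>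
        rw [cons_prefix_set]
        exact IH.1 i (by simpa using hi)
    · rw [cons_full_set]
      exact IH.2

end LSeq

section Build
variable {α : Type*} {r : Set α} {conflict prec : α → α → Prop}

lemma build (hr : r.Finite)
    (hsymm : ∀ x y, conflict x y → conflict y x)
    (hirr : ∀ x, ¬ conflict x x)
    (hsub : ∀ x y, prec x y → conflict x y)
    (hasymm : ∀ x y, prec x y → ¬ prec y x)
    (hext_acyc : ∀ prec' : α → α → Prop,
      (∀ x y, prec' x y → conflict x y) →
      (∀ x y, prec' x y → ¬ prec' y x) →
      (∀ x y, prec x y → prec' x y) →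
      Acyclic prec')
    {X : Set α} (hX : IsGRepair r conflict prec X) :
    ∀ (n : ℕ) (S : Set α), S ⊆ r → S.ncard ≤ n →
      (∀ y ∈ S, y ∉ X → ∃ a ∈ X ∩ S, conflict y a) →
      (∀ a ∈ X, a ∉ S → ∀ s ∈ S, ¬ conflict a s) →
      ∃ L : List α, LSeq conflict prec S L ∧ (∀ a ∈ L, a ∈ X ∩ S) ∧
        ∀ a ∈ X ∩ S, a ∈ L := by
  intro n
  induction n with
  | zero =>
    intro S hSr hcard _ _
    have hSfin : S.Finite := hr.subset hSr
    have : S = ∅ := (Set.ncard_eq_zero hSfin).mp (Nat.le_zero.mp hcard)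
    subst this
    refine ⟨[], ?_, by simp, by simp⟩
    show winnow prec ∅ = ∅
    ext t; simp [winnow]
  | succ n ih =>
    intro S hSr hcard hinv1 hinv2
    have hSfin : S.Finite := hr.subset hSr
    rcases S.eq_empty_or_nonempty with rfl | hne
    · refine ⟨[], ?_, by simp, by simp⟩
      show winnow prec ∅ = ∅
      ext t; simp [winnow]
    · -- the extension prec'
      set prec' : α → α → Prop :=
        fun a b => prec a b ∨ (conflict a b ∧ b ∈ X ∧ a ∉ X ∧ ¬ prec b a) with hprec'def
      have hsub' : ∀ x y, prec' x y → conflict x y := by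
        rintro x y (h | ⟨h, _⟩)
        · exact hsub x y h
        · exact h
      have hasymm' : ∀ x y, prec' x y → ¬ prec' y x := by
        rintro x y (h | ⟨hc, hyX, hxX, hnp⟩) (h' | ⟨hc', hxX', hyX', hnp'⟩)
        · exact hasymm x y h h'
        · exact hnp' h
        · exact hnp h'
        · exact hyX' hyX
      have hmono : ∀ x y, prec x y → prec' x y := fun x y h => Or.inl h
      have hac' : Acyclic prec' := hext_acyc prec' hsub' hasymm' hmono
      obtain ⟨m, hmS, hmax⟩ := exists_max_of_acyclic hac' hSfin hne
      -- the maximal element is in X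
      have hmX : m ∈ X := by
        by_contra hmX
        obtain ⟨a, ⟨haX, haS⟩, hconf⟩ := hinv1 m hmS hmX
        -- build a strictly better repair Y containing m
        have hCr : insert m (X \ nbhd conflict m) ⊆ r :=
          Set.insert_subset (hSr hmS) ((Set.diff_subset).trans hX.1.1)
        have hCind : ∀ a ∈ insert m (X \ nbhd conflict m),
            ∀ b ∈ insert m (X \ nbhd conflict m), ¬ conflict a b := by
          rintro a ha b hb
          rcases ha with rfl | ha
          · rcases hb with rfl | hb
            · exact hirr _
            · exact fun hc => hb.2 (Or.inr hc)
          · rcases hb with rfl | hb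
            · exact fun hc => ha.2 (Or.inr (hsymm _ _ hc))
            · exact hX.1.2.1 a ha.1 b hb.1
        obtain ⟨Y, hYrep, hCY⟩ := exists_repair_superset hr hsymm hirr hCr hCind
        have hmY : m ∈ Y := hCY (Set.mem_insert _ _)
        have hll : ll prec X Y := by
          intro x hx
          have hxnb : x ∈ nbhd conflict m := by
            by_contra h
            exact hx.2 (hCY (Set.mem_insert_of_mem _ ⟨hx.1, h⟩))
          have hconfmx : conflict m x := by
            rcases hxnb with h | h
            · exact absurd (h ▸ hx.1 : m ∈ X) hmX
            · exact h
          have hxS : x ∈ S := by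
            by_contra h
            exact hinv2 x hx.1 h m hmS (hsymm m x hconfmx)
          have hpxm : prec x m := by
            by_contra hp
            exact hmax x hxS (Or.inr ⟨hconfmx, hx.1, hmX, hp⟩)
          exact ⟨m, ⟨hmY, hmX⟩, hpxm⟩
        have := hX.2 Y hYrep hll
        exact hmX (this ▸ hmY)
      have hmwin : m ∈ winnow prec S :=
        ⟨hmS, fun ⟨t, htS, hpt⟩ => hmax t htS (Or.inl hpt)⟩
      -- recurse on S \ nbhd m
      set S' := S \ nbhd conflict m with hS'def
      have hS'r : S' ⊆ r := (Set.diff_subset).trans hSr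
      have hmnS' : m ∉ S' := fun h => h.2 (Or.inl rfl)
      have hS'lt : S'.ncard < S.ncard :=
        Set.ncard_lt_ncard ⟨Set.diff_subset, fun h => hmnS' (h hmS)⟩ hSfin
      have hinv1' : ∀ y ∈ S', y ∉ X → ∃ a ∈ X ∩ S', conflict y a := by
        intro y hyS' hyX
        obtain ⟨a, ⟨haX, haS⟩, hconf⟩ := hinv1 y hyS'.1 hyX
        have hane : a ≠ m := by
          rintro rfl
          exact hyS'.2 (Or.inr (hsymm y a hconf))
        have hanc : ¬ conflict m a := hX.1.2.1 m hmX a haX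
        exact ⟨a, ⟨haX, haS, fun h => h.elim (fun h => hane h) hanc⟩, hconf⟩
      have hinv2' : ∀ a ∈ X, a ∉ S' → ∀ s ∈ S', ¬ conflict a s := by
        intro a haX haS' s hsS'
        by_cases haS : a ∈ S
        · have hanb : a ∈ nbhd conflict m := by
            by_contra h
            exact haS' ⟨haS, h⟩
          have : a = m := by
            rcases hanb with h | h
            · exact h
            · exact absurd h (hX.1.2.1 m hmX a haX)
          subst this
          exact fun hc => hsS'.2 (Or.inr hc)
        · exact hinv2 a haX haS s hsS'.1
      obtain ⟨L', hL'seq, hL'mem, hL'cov⟩ := ih S' hS'r (by omega) hinv1' hinv2'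
      refine ⟨m :: L', ⟨hmwin, hL'seq⟩, ?_, ?_⟩
      · intro a ha
        rcases List.mem_cons.mp ha with rfl | ha
        · exact ⟨hmX, hmS⟩
        · obtain ⟨h1, h2⟩ := hL'mem a ha
          exact ⟨h1, h2.1⟩
      · intro a ⟨haX, haS⟩
        by_cases ham : a = m
        · exact ham ▸ List.mem_cons_self
        · have : a ∈ S' :=
            ⟨haS, fun h => h.elim ham (hX.1.2.1 m hmX a haX)⟩
          exact List.mem_cons_of_mem _ (hL'cov a ⟨haX, this⟩)

end Build

section Main
variable {α : Type*} {r : Set α} {conflict prec : α → α → Prop}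

lemma inj_of_hwin {n : ℕ} {x : Fin n → α}
    (hwin : ∀ i : Fin n, x i ∈ winnow prec
      (r \ {y | ∃ j, j < i ∧ y ∈ nbhd conflict (x j)})) :
    Function.Injective x := by
  intro i j hij
  by_contra hne
  rcases lt_or_gt_of_ne hne with h | h
  · exact (hwin j).1.2 ⟨i, h, Or.inl (Set.mem_singleton_iff.mpr hij.symm)⟩
  · exact (hwin i).1.2 ⟨j, h, Or.inl (Set.mem_singleton_iff.mpr hij)⟩

lemma l_to_g (hr : r.Finite)
    (hsymm : ∀ x y, conflict x y → conflict y x)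
    (hirr : ∀ x, ¬ conflict x x)
    (hsub : ∀ x y, prec x y → conflict x y)
    (hasymm : ∀ x y, prec x y → ¬ prec y x)
    (hext_acyc : ∀ prec' : α → α → Prop,
      (∀ x y, prec' x y → conflict x y) →
      (∀ x y, prec' x y → ¬ prec' y x) →
      (∀ x y, prec x y → prec' x y) →
      Acyclic prec')
    {X : Set α} (hX : IsLRepair r conflict prec X) :
    IsGRepair r conflict prec X := by
  obtain ⟨n, x, hinj, hrange, hwin, hend⟩ := hX
  have hprec_ac : Acyclic prec := hext_acyc prec hsub hasymm (fun _ _ h => h)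
  have hxr : ∀ i, x i ∈ r := fun i => (hwin i).1.1
  have hxX : ∀ i, x i ∈ X := fun i => hrange ▸ Set.mem_range_self i
  have hXr : X ⊆ r := by
    rw [hrange]; rintro _ ⟨i, rfl⟩; exact hxr i
  have hnoconf : ∀ i j : Fin n, i < j → ¬ conflict (x i) (x j) := by
    intro i j hij hc
    exact (hwin j).1.2 ⟨i, hij, Or.inr hc⟩
  have hind : ∀ a ∈ X, ∀ b ∈ X, ¬ conflict a b := by
    rw [hrange]; rintro _ ⟨i, rfl⟩ _ ⟨j, rfl⟩ hc
    rcases lt_trichotomy i j with h | h | h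
    · exact hnoconf i j h hc
    · subst h; exact hirr _ hc
    · exact hnoconf j i h (hsymm _ _ hc)
  have hmaxrep : ∀ y ∈ r, y ∉ X → ∃ a ∈ X, conflict y a := by
    intro y hyr hyX
    by_contra h
    push_neg at h
    have hyfin : y ∈ r \ {y | ∃ i, y ∈ nbhd conflict (x i)} := by
      refine ⟨hyr, ?_⟩
      rintro ⟨i, hi | hi⟩
      · exact hyX (hi ▸ hxX i)
      · exact h (x i) (hxX i) (hsymm _ _ hi)
    have hw := winnow_nonempty hprec_ac (hr.subset Set.diff_subset) ⟨y, hyfin⟩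
    rw [hend] at hw
    exact Set.not_nonempty_empty hw
  have hrep : IsRepair r conflict X := ⟨hXr, hind, hmaxrep⟩
  refine ⟨hrep, ?_⟩
  intro Y hYrep hll
  have hXY : ∀ k : ℕ, ∀ i : Fin n, i.val = k → x i ∈ Y := by
    intro k
    induction k using Nat.strong_induction_on with
    | _ k ih =>
      intro i hik
      by_contra hxiY
      obtain ⟨y, ⟨hyY, hyX⟩, hpy⟩ := hll (x i) ⟨hxX i, hxiY⟩
      apply (hwin i).2
      refine ⟨y, ⟨hYrep.1 hyY, ?_⟩, hpy⟩
      rintro ⟨j, hji, hy | hy⟩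
      · exact hyX (hy ▸ hxX j)
      · have hxjY : x j ∈ Y := ih j.val (by omega) j rfl
        exact hYrep.2.1 (x j) hxjY y hyY hy
  have hXsubY : X ⊆ Y := by
    rw [hrange]; rintro _ ⟨i, rfl⟩; exact hXY i.val i rfl
  refine Set.Subset.antisymm ?_ hXsubY
  intro y hyY
  by_contra hyX
  obtain ⟨a, haX, hc⟩ := hmaxrep y (hYrep.1 hyY) hyX
  exact hYrep.2.1 y hyY a (hXsubY haX) hc

end Main

/-- if every extension of the priority ≺ is acyclic, then the
g-repairs coincide with the l-repairs. -/
theorem grepair_eq_lrepair_of_acyclic_extensions {α : Type*} (r : Set α)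
    (hr : r.Finite) (conflict prec : α → α → Prop)
    (hsymm : ∀ x y, conflict x y → conflict y x)
    (hirr : ∀ x, ¬ conflict x x)
    (hsub : ∀ x y, prec x y → conflict x y)
    (hasymm : ∀ x y, prec x y → ¬ prec y x)
    (hext_acyc : ∀ prec' : α → α → Prop,
      (∀ x y, prec' x y → conflict x y) →
      (∀ x y, prec' x y → ¬ prec' y x) →
      (∀ x y, prec x y → prec' x y) →
      Acyclic prec') :
    ∀ X : Set α, IsGRepair r conflict prec X ↔ IsLRepair r conflict prec X := by
  intro X
  constructor
  · intro hX
    obtain ⟨L, hseq, hmem, hcov⟩ :=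
      build hr hsymm hirr hsub hasymm hext_acyc hX r.ncard r subset_rfl le_rfl
        (fun y hy hyX => by
          obtain ⟨a, haX, hc⟩ := hX.1.2.2 y hy hyX
          exact ⟨a, ⟨haX, hX.1.1 haX⟩, hc⟩)
        (fun a haX har => absurd (hX.1.1 haX) har)
    have hget := LSeq_get hseq
    have hwinF : ∀ i : Fin L.length, L.get i ∈ winnow prec
        (r \ {y | ∃ j, j < i ∧ y ∈ nbhd conflict (L.get j)}) := by
      intro i
      have h := hget.1 i.val i.isLt
      have heq : {y | ∃ j, ∃ (hj : j < L.length), j < i.val ∧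
          y ∈ nbhd conflict (L.get ⟨j, hj⟩)} =
          {y | ∃ j : Fin L.length, j < i ∧ y ∈ nbhd conflict (L.get j)} := by
        ext y
        simp only [Set.mem_setOf_eq]
        exact ⟨fun ⟨jv, hj, hji, hy⟩ => ⟨⟨jv, hj⟩, hji, hy⟩,
          fun ⟨j, hji, hy⟩ => ⟨j.1, j.2, hji, hy⟩⟩
      rw [heq] at h
      exact h
    refine ⟨L.length, L.get, inj_of_hwin hwinF, ?_, hwinF, ?_⟩
    · ext a
      simp only [Set.mem_range]
      constructor
      · intro haX
        obtain ⟨i, hi⟩ := List.mem_iff_get.mp (hcov a ⟨haX, hX.1.1 haX⟩)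
        exact ⟨i, hi⟩
      · rintro ⟨i, rfl⟩
        exact (hmem _ (List.get_mem L i)).1
    · have h := hget.2
      have heq : {y | ∃ j, ∃ (hj : j < L.length),
          y ∈ nbhd conflict (L.get ⟨j, hj⟩)} =
          {y | ∃ i : Fin L.length, y ∈ nbhd conflict (L.get i)} := by
        ext y
        simp only [Set.mem_setOf_eq]
        exact ⟨fun ⟨jv, hj, hy⟩ => ⟨⟨jv, hj⟩, hy⟩, fun ⟨j, hy⟩ => ⟨j.1, j.2, hy⟩⟩
      rw [heq] at h
      exact h
  · exact l_to_g hr hsymm hirr hsub hasymm hext_acyc
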